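/- arXiv:1612.08146 — 2 statements merged into one kernel-verified Lean document; each statement's English description precedes it below -/
import Mathlib

section
/- The Motzkin number M_n is divisible by 11 if and only if n has one of the forms (11i+9)·11^{2j−1} − 2, (11i+1)·11^{2j} − 2, (11i+2)·11^{2j−1} − 1, or (11i+10)·11^{2j} − 1, where i, j are natural numbers with j ≥ 1. -/
open Finset

def motzkin (n : ℕ) : ℕ := ∑ k ∈ Finset.range (n + 1), n.choose (2 * k) * catalan k

open Polynomial

def Tn (n k : ℕ) : ℕ :=
  ∑ c ∈ Finset.range (n + 1), (if 2 * c ≤ k then (n - c).choose (k - 2 * c) else 0) * n.choose c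

noncomputable def P (R : Type) [Semiring R] (n : ℕ) : R[X] := (1 + X + X ^ 2) ^ n

lemma coeff_P_nat (n k : ℕ) : (P ℕ n).coeff k = Tn n k := by
  have h : (1 + X + X ^ 2 : ℕ[X]) = X ^ 2 + (1 + X) := by ring
  rw [P, h, add_pow, Polynomial.finset_sum_coeff]
  refine Finset.sum_congr rfl fun c hc => ?_
  rw [← Polynomial.C_eq_natCast, Polynomial.coeff_mul_C, ← pow_mul,
    Polynomial.coeff_X_pow_mul', Polynomial.coeff_one_add_X_pow]
  split_ifs <;> simp [Nat.cast_id]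

lemma cat_id (k : ℕ) : (2 * k).choose k = (2 * k).choose (k + 1) + catalan k := by
  have h1 : (2 * k).choose (k + 1) * (k + 1) = (2 * k).choose k * k := by
    have := Nat.choose_succ_right_eq (2 * k) k
    rwa [show 2 * k - k = k by omega] at this
  have h2 : (k + 1) * catalan k = (2 * k).choose k := by
    rw [succ_mul_catalan_eq_centralBinom, Nat.centralBinom]
  apply Nat.eq_of_mul_eq_mul_left (show 0 < k + 1 by omega)
  nlinarith [h1, h2]
lemma motzkin_id (n : ℕ) : motzkin n + Tn n (n + 2) = Tn n n := by
  have hTnn : Tn n n = (∑ c ∈ range (n + 1), n.choose (2*c) * (2*c).choose (c+1))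
      + motzkin n := by
    rw [Tn, motzkin, ← Finset.sum_add_distrib]
    refine Finset.sum_congr rfl fun c hc => ?_
    rw [← Nat.mul_add, ← cat_id]
    by_cases h : 2 * c ≤ n
    · rw [if_pos h, Nat.choose_symm_of_eq_add (show n - c = (n - 2*c) + c by omega),
        mul_comm, Nat.choose_mul (n := n) (k := 2*c) (s := c) (by omega), show 2*c - c = c by omega]
    · have h0 : n.choose (2*c) = 0 := Nat.choose_eq_zero_of_lt (by omega)
      rw [if_neg h, h0, zero_mul, zero_mul]
  have hTn2 : Tn n (n + 2) = ∑ c ∈ range (n + 1), n.choose (2*c) * (2*c).choose (c+1) := by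
    rw [Tn]
    rcases Nat.eq_zero_or_pos n with rfl | hn
    · simp [Nat.choose]
    rw [Finset.sum_range_succ' _ n,
        Finset.sum_range_succ (fun c => n.choose (2*c) * (2*c).choose (c+1)) n]
    have hlast : (if 2 * 0 ≤ n + 2 then (n - 0).choose (n + 2 - 2 * 0) else 0) * n.choose 0
        = n.choose (2*n) * (2*n).choose (n+1) := by
      rw [if_pos (by omega)]
      have e1 : n.choose (n + 2 - 2*0) = 0 := Nat.choose_eq_zero_of_lt (by omega)
      have e2 : n.choose (2*n) * (2*n).choose (n+1) = 0 := by
        rcases Nat.eq_zero_or_pos n with rfl | h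
        · simp
        · rw [Nat.choose_eq_zero_of_lt (by omega), zero_mul]
      simp only [Nat.sub_zero] at e1 ⊢
      rw [e1, e2, zero_mul]
    rw [hlast]
    congr 1
    refine Finset.sum_congr rfl fun k hk => ?_
    simp only [Finset.mem_range] at hk
    by_cases h : 2 * (k + 1) ≤ n + 2
    · rw [if_pos h]
      rcases Nat.eq_zero_or_pos k with rfl | hkpos
      · have : (n - 1).choose (n + 2 - 2 * (0 + 1)) = 0 := Nat.choose_eq_zero_of_lt (by omega)
        simp [this]
        exact Or.inl (Nat.choose_eq_zero_of_lt (by omega))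
      · rw [Nat.choose_symm_of_eq_add (show n - (k+1) = (n + 2 - 2*(k+1)) + (k - 1) by omega)]
        have := Nat.choose_mul (n := n) (k := 2*k) (s := k+1) (show k + 1 ≤ 2*k by omega)
        rw [show 2*k - (k+1) = k - 1 by omega] at this
        rw [mul_comm, ← this]
    · have h0 : n.choose (2*k) = 0 := Nat.choose_eq_zero_of_lt (by omega)
      rw [if_neg h, h0, zero_mul, zero_mul]
  omega

noncomputable def tc (n k : ℕ) : ZMod 11 := (P (ZMod 11) n).coeff k

lemma tc_eq_cast (n k : ℕ) : tc n k = ((Tn n k : ℕ) : ZMod 11) := by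
  rw [← coeff_P_nat, tc]
  have : P (ZMod 11) n = (P ℕ n).map (Nat.castRingHom (ZMod 11)) := by
    simp [P, Polynomial.map_pow, Polynomial.map_add, Polynomial.map_one, Polynomial.map_X]
  rw [this, Polynomial.coeff_map]
  rfl

lemma natDegree_P (n : ℕ) : (P (ZMod 11) n).natDegree ≤ 2 * n := by
  have h : (1 + X + X ^ 2 : (ZMod 11)[X]).natDegree ≤ 2 := by compute_degree
  calc (P (ZMod 11) n).natDegree ≤ n * (1 + X + X ^ 2 : (ZMod 11)[X]).natDegree :=
        Polynomial.natDegree_pow_le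
    _ ≤ n * 2 := by exact Nat.mul_le_mul_left n h
    _ = 2 * n := by ring

instance : Fact (Nat.Prime 11) := ⟨by norm_num⟩

lemma P_digit (a b : ℕ) :
    P (ZMod 11) (11 * a + b) = expand (ZMod 11) 11 (P (ZMod 11) a) * P (ZMod 11) b := by
  have h11 : (1 + X + X ^ 2 : (ZMod 11)[X]) ^ 11 = expand (ZMod 11) 11 (1 + X + X ^ 2) := by
    have := Polynomial.map_frobenius_expand 11 (1 + X + X ^ 2 : (ZMod 11)[X])
    rwa [ZMod.frobenius_zmod, Polynomial.map_id, eq_comm] at this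
  rw [P, pow_add, pow_mul, h11, ← map_pow, P, P]

lemma coeff_L1 (q p : (ZMod 11)[X]) (a s : ℕ) (hs : s < 11) (hd : p.natDegree < 11 + s) :
    (expand (ZMod 11) 11 q * p).coeff (11 * a + s) = q.coeff a * p.coeff s := by
  rw [Polynomial.coeff_mul, Finset.sum_eq_single ((11 * a, s) : ℕ × ℕ)]
  · rw [Polynomial.coeff_expand (by norm_num : 0 < 11), if_pos ⟨a, rfl⟩,
      Nat.mul_div_cancel_left a (by norm_num : 0 < 11)]
  · rintro ⟨i, j⟩ hb hne
    rw [Finset.HasAntidiagonal.mem_antidiagonal] at hb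
    rw [Polynomial.coeff_expand (by norm_num : 0 < 11)]
    by_cases hdvd : 11 ∣ i
    · obtain ⟨m, rfl⟩ := hdvd
      rcases Nat.lt_or_ge p.natDegree j with hj | hj
      · rw [Polynomial.coeff_eq_zero_of_natDegree_lt hj, mul_zero]
      · exfalso; apply hne
        have hma : m = a := by omega
        subst hma
        have : j = s := by omega
        subst this; rfl
    · rw [if_neg hdvd, zero_mul]
  · intro h; simp [Finset.HasAntidiagonal.mem_antidiagonal] at h

lemma coeff_L2 (q p : (ZMod 11)[X]) (a s : ℕ) (hs1 : 11 ≤ s) (hs2 : s < 22)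
    (hd : p.natDegree < 22) :
    (expand (ZMod 11) 11 q * p).coeff (11 * a + s) =
      q.coeff a * p.coeff s + q.coeff (a + 1) * p.coeff (s - 11) := by
  rw [Polynomial.coeff_mul]
  have hne : ((11 * a, s) : ℕ × ℕ) ≠ (11 * (a + 1), s - 11) := by
    intro h; rw [Prod.mk.injEq] at h; omega
  have hsub : ({(11 * a, s), (11 * (a + 1), s - 11)} : Finset (ℕ × ℕ))
      ⊆ Finset.HasAntidiagonal.antidiagonal (11 * a + s) := by
    intro x hx
    simp only [Finset.mem_insert, Finset.mem_singleton] at hx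
    rcases hx with rfl | rfl <;> rw [Finset.HasAntidiagonal.mem_antidiagonal] <;> omega
  rw [← Finset.sum_subset hsub, Finset.sum_pair hne]
  · rw [Polynomial.coeff_expand (by norm_num : 0 < 11), if_pos ⟨a, rfl⟩,
      Nat.mul_div_cancel_left a (by norm_num : 0 < 11),
      Polynomial.coeff_expand (by norm_num : 0 < 11), if_pos ⟨a + 1, rfl⟩,
      Nat.mul_div_cancel_left (a + 1) (by norm_num : 0 < 11)]
  · rintro ⟨i, j⟩ hb hnotin
    rw [Finset.HasAntidiagonal.mem_antidiagonal] at hb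
    simp only [Finset.mem_insert, Finset.mem_singleton] at hnotin
    push_neg at hnotin
    rw [Polynomial.coeff_expand (by norm_num : 0 < 11)]
    by_cases hdvd : 11 ∣ i
    · obtain ⟨m, rfl⟩ := hdvd
      rcases Nat.lt_or_ge p.natDegree j with hj | hj
      · rw [Polynomial.coeff_eq_zero_of_natDegree_lt hj, mul_zero]
      · exfalso
        have hma : m = a ∨ m = a + 1 := by omega
        rcases hma with rfl | rfl
        · exact hnotin.1 (by rw [Prod.mk.injEq]; omega)
        · exact hnotin.2 (by rw [Prod.mk.injEq]; omega)
    · rw [if_neg hdvd, zero_mul]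

-- recursions
lemma tc_rec (a b s : ℕ) (hb : b ≤ 10) (hs : s < 11) (hd : 2 * b < 11 + s) :
    tc (11 * a + b) (11 * a + s) = tc a a * tc b s := by
  rw [tc, P_digit, coeff_L1 _ _ a s hs (lt_of_le_of_lt (natDegree_P b) hd)]; rfl

lemma tc_rec2 (a b s : ℕ) (hb : b ≤ 10) (hs1 : 11 ≤ s) (hs2 : s < 22) :
    tc (11 * a + b) (11 * a + s) = tc a a * tc b s + tc a (a + 1) * tc b (s - 11) := by
  rw [tc, P_digit, coeff_L2 _ _ a s hs1 hs2 (lt_of_le_of_lt (natDegree_P b) (by omega))]; rfl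

lemma tc_diag (a b : ℕ) (hb : b ≤ 10) : tc (11 * a + b) (11 * a + b) = tc a a * tc b b :=
  tc_rec a b b hb (by omega) (by omega)

lemma tc_diag_ne (a : ℕ) : tc a a ≠ 0 := by
  induction a using Nat.strong_induction_on with
  | _ a IH =>
    rcases Nat.eq_zero_or_pos a with rfl | ha
    · rw [tc_eq_cast]; decide
    · have h : a = 11 * (a / 11) + a % 11 := (Nat.div_add_mod a 11).symm
      have hb : a % 11 ≤ 10 := by omega
      rw [h, tc_diag _ _ hb]
      refine mul_ne_zero (IH _ (by omega)) ?_
      have : a % 11 < 11 := by omega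
      interval_cases h : a % 11 <;> (rw [tc_eq_cast]; decide)

noncomputable def rho (n : ℕ) : ZMod 11 := tc n (n + 1) * (tc n n)⁻¹

def Pd (u v a : ℕ) : Prop :=
  ∃ m e, a + 1 = m * 11 ^ e ∧ ((m % 11 = u ∧ Even e) ∨ (m % 11 = v ∧ Odd e))

lemma Pd_low {u v a' b : ℕ} (hb : b ≤ 9) (hu0 : 0 < u) (hu : u < 11) (hv0 : 0 < v)
    (hv : v < 11) : Pd u v (11 * a' + b) ↔ b + 1 = u := by
  constructor
  · rintro ⟨m, e, heq, h⟩
    rcases Nat.eq_zero_or_pos e with rfl | he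
    · simp only [pow_zero, mul_one] at heq
      have hm : m % 11 = b + 1 := by omega
      rcases h with ⟨h1, _⟩ | ⟨h1, h2⟩
      · omega
      · exact absurd h2 (by simp [Nat.odd_iff])
    · exfalso
      obtain ⟨e', rfl⟩ : ∃ e', e = e' + 1 := ⟨e - 1, by omega⟩
      rw [pow_succ, ← mul_assoc] at heq
      omega
  · intro h
    exact ⟨11 * a' + b + 1, 0, by ring, Or.inl ⟨by omega, Even.zero⟩⟩

lemma Pd_ten {u v a' : ℕ} (hu0 : 0 < u) (hv0 : 0 < v) :
    Pd u v (11 * a' + 10) ↔ Pd v u a' := by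
  constructor
  · rintro ⟨m, e, heq, h⟩
    rcases Nat.eq_zero_or_pos e with rfl | he
    · simp only [pow_zero, mul_one] at heq
      rcases h with ⟨h1, _⟩ | ⟨h1, _⟩ <;> omega
    · obtain ⟨e', rfl⟩ : ∃ e', e = e' + 1 := ⟨e - 1, by omega⟩
      rw [pow_succ, ← mul_assoc] at heq
      refine ⟨m, e', by omega, ?_⟩
      rcases h with ⟨h1, h2⟩ | ⟨h1, h2⟩
      · rw [Nat.even_add_one, Nat.not_even_iff_odd] at h2
        exact Or.inr ⟨h1, h2⟩
      · rw [Nat.odd_add_one, Nat.not_odd_iff_even] at h2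
        exact Or.inl ⟨h1, h2⟩
  · rintro ⟨m, e, heq, h⟩
    refine ⟨m, e + 1, by rw [pow_succ, ← mul_assoc]; omega, ?_⟩
    rcases h with ⟨h1, h2⟩ | ⟨h1, h2⟩
    · exact Or.inr ⟨h1, h2.add_one⟩
    · exact Or.inl ⟨h1, h2.add_one⟩

lemma rho_low (a' b : ℕ) (hb : b ≤ 9) :
    rho (11 * a' + b) = tc b (b + 1) * (tc b b)⁻¹ := by
  have h1 : tc (11 * a' + b) (11 * a' + b) = tc a' a' * tc b b := tc_diag a' b (by omega)
  have h2 : tc (11 * a' + b) (11 * a' + b + 1) = tc a' a' * tc b (b + 1) := by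
    have := tc_rec a' b (b + 1) (by omega) (by omega) (by omega)
    rwa [show 11 * a' + (b + 1) = 11 * a' + b + 1 by ring] at this
  have hF := tc_diag_ne a'
  have hf := tc_diag_ne b
  rw [rho, h1, h2, mul_inv]
  field_simp

lemma rho_ten (a' : ℕ) : rho (11 * a' + 10) = -1 - rho a' := by
  have h1 : tc (11 * a' + 10) (11 * a' + 10) = tc a' a' * tc 10 10 :=
    tc_diag a' 10 (by omega)
  have h2 : tc (11 * a' + 10) (11 * a' + 10 + 1) =
      tc a' a' * tc 10 11 + tc a' (a' + 1) * tc 10 0 := by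
    have := tc_rec2 a' 10 11 (by omega) (by omega) (by omega)
    rwa [show 11 * a' + 11 = 11 * a' + 10 + 1 by ring, show (11 : ℕ) - 11 = 0 by rfl] at this
  have e1 : tc 10 10 = -1 := by
    rw [tc_eq_cast, show (-1 : ZMod 11) = ((10:ℕ):ZMod 11) by decide]
    norm_num [show Tn 10 10 = 8953 by decide]
    decide
  have e2 : tc 10 11 = 1 := by
    rw [tc_eq_cast, show (1 : ZMod 11) = ((1:ℕ):ZMod 11) by decide]
    decide
  have e3 : tc 10 0 = 1 := by
    rw [tc_eq_cast, show (1 : ZMod 11) = ((1:ℕ):ZMod 11) by decide]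
    decide
  have hF := tc_diag_ne a'
  have aux : ∀ F G : ZMod 11, F ≠ 0 → (F * 1 + G * 1) * (F * -1)⁻¹ = -1 - G * F⁻¹ := by
    intro F G hF'
    rw [mul_one, mul_one, show F * -1 = -F by ring, inv_neg, mul_neg, add_mul,
      mul_inv_cancel₀ hF']
    ring
  rw [rho, h1, h2, e1, e2, e3, rho]
  exact aux _ _ hF

lemma rho_char (a : ℕ) : (rho a = 10 ↔ Pd 9 1 a) ∧ (rho a = 1 ↔ Pd 2 10 a) ∧
    (rho a = 0 ↔ Pd 1 9 a) ∧ (rho a = 9 ↔ Pd 10 2 a) := by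
  induction a using Nat.strong_induction_on with
  | _ a IH =>
  by_cases hb : a % 11 ≤ 9
  · obtain ⟨a', b, hb9, rfl⟩ : ∃ a' b, b ≤ 9 ∧ a = 11 * a' + b :=
      ⟨a / 11, a % 11, hb, (Nat.div_add_mod a 11).symm⟩
    rw [rho_low a' b hb9,
      Pd_low hb9 (by norm_num) (by norm_num) (by norm_num) (by norm_num),
      Pd_low hb9 (by norm_num) (by norm_num) (by norm_num) (by norm_num),
      Pd_low hb9 (by norm_num) (by norm_num) (by norm_num) (by norm_num),
      Pd_low hb9 (by norm_num) (by norm_num) (by norm_num) (by norm_num)]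
    rw [← div_eq_mul_inv, div_eq_iff (tc_diag_ne b), div_eq_iff (tc_diag_ne b),
      div_eq_iff (tc_diag_ne b), div_eq_iff (tc_diag_ne b)]
    interval_cases b <;> rw [tc_eq_cast, tc_eq_cast] <;> refine ⟨?_, ?_, ?_, ?_⟩ <;> decide
  · obtain ⟨a', rfl⟩ : ∃ a', a = 11 * a' + 10 :=
      ⟨a / 11, by omega⟩
    obtain ⟨I1, I2, I3, I4⟩ := IH a' (by omega)
    rw [rho_ten,
      Pd_ten (by norm_num) (by norm_num), Pd_ten (by norm_num) (by norm_num),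
      Pd_ten (by norm_num) (by norm_num), Pd_ten (by norm_num) (by norm_num),
      ← I1, ← I2, ← I3, ← I4]
    generalize rho a' = r
    revert r
    decide

lemma motzkin_cast (n : ℕ) : (motzkin n : ZMod 11) = tc n n - tc n (n + 2) := by
  have h := congrArg (Nat.cast : ℕ → ZMod 11) (motzkin_id n)
  push_cast at h
  rw [tc_eq_cast, tc_eq_cast]
  linear_combination h

lemma Pd_iff_exists (u v a : ℕ) (hu : u < 11) (hv : v < 11) :
    Pd u v a ↔ ∃ i j : ℕ, 1 ≤ j ∧ (11 * (a + 1) = (11 * i + u) * 11 ^ (2 * j - 1) ∨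
      11 * (a + 1) = (11 * i + v) * 11 ^ (2 * j)) := by
  constructor
  · rintro ⟨m, e, heq, ⟨h1, t, rfl⟩ | ⟨h1, t, rfl⟩⟩
    · refine ⟨m / 11, t + 1, by omega, Or.inl ?_⟩
      rw [show 2 * (t + 1) - 1 = (t + t) + 1 by omega, pow_succ,
        show 11 * (m / 11) + u = m by omega, heq]
      ring
    · refine ⟨m / 11, t + 1, by omega, Or.inr ?_⟩
      rw [show 2 * (t + 1) = (2 * t + 1) + 1 by omega, pow_succ,
        show 11 * (m / 11) + v = m by omega, heq]
      ring
  · rintro ⟨i, j, hj, h | h⟩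
    · obtain ⟨t, rfl⟩ : ∃ t, j = t + 1 := ⟨j - 1, by omega⟩
      rw [show 2 * (t + 1) - 1 = 2 * t + 1 by omega, pow_succ, ← mul_assoc] at h
      exact ⟨11 * i + u, 2 * t, by omega, Or.inl ⟨by omega, ⟨t, by omega⟩⟩⟩
    · obtain ⟨t, rfl⟩ : ∃ t, j = t + 1 := ⟨j - 1, by omega⟩
      rw [show 2 * (t + 1) = (2 * t + 1) + 1 by omega, pow_succ, ← mul_assoc] at h
      exact ⟨11 * i + v, 2 * t + 1, by omega, Or.inr ⟨by omega, ⟨t, by omega⟩⟩⟩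

lemma dvd_form (c j x : ℕ) (hj : 1 ≤ j) (h : x = c * 11 ^ (2 * j - 1)) : 11 ∣ x := by
  obtain ⟨t, rfl⟩ : ∃ t, j = t + 1 := ⟨j - 1, by omega⟩
  rw [show 2 * (t + 1) - 1 = 2 * t + 1 by omega, pow_succ, ← mul_assoc] at h
  exact ⟨c * 11 ^ (2 * t), by omega⟩

lemma dvd_form2 (c j x : ℕ) (hj : 1 ≤ j) (h : x = c * 11 ^ (2 * j)) : 11 ∣ x := by
  obtain ⟨t, rfl⟩ : ∃ t, j = t + 1 := ⟨j - 1, by omega⟩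
  rw [show 2 * (t + 1) = (2 * t + 1) + 1 by omega, pow_succ, ← mul_assoc] at h
  exact ⟨c * 11 ^ (2 * t + 1), by omega⟩

theorem motzkin_mod_eleven (n : ℕ) :
    11 ∣ motzkin n ↔
      ∃ i j : ℕ, 1 ≤ j ∧
        (n + 2 = (11 * i + 9) * 11 ^ (2 * j - 1) ∨
         n + 2 = (11 * i + 1) * 11 ^ (2 * j) ∨
         n + 1 = (11 * i + 2) * 11 ^ (2 * j - 1) ∨
         n + 1 = (11 * i + 10) * 11 ^ (2 * j)) := by
  rw [← ZMod.natCast_eq_zero_iff, motzkin_cast]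
  have hF := tc_diag_ne (n / 11)
  by_cases hb : n % 11 ≤ 8
  · -- both sides false
    obtain ⟨a, b, hb8, rfl⟩ : ∃ a b, b ≤ 8 ∧ n = 11 * a + b :=
      ⟨n / 11, n % 11, hb, (Nat.div_add_mod n 11).symm⟩
    constructor
    · intro h
      exfalso
      rw [tc_diag a b (by omega),
        show 11 * a + b + 2 = 11 * a + (b + 2) by ring,
        tc_rec a b (b + 2) (by omega) (by omega) (by omega), ← mul_sub] at h
      rcases mul_eq_zero.1 h with h0 | h0
      · exact tc_diag_ne a h0
      · revert h0
        interval_cases b <;> rw [tc_eq_cast, tc_eq_cast] <;> decide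
    · rintro ⟨i, j, hj, h | h | h | h⟩
      · have := dvd_form _ _ _ hj h; omega
      · have := dvd_form2 _ _ _ hj h; omega
      · have := dvd_form _ _ _ hj h; omega
      · have := dvd_form2 _ _ _ hj h; omega
  · by_cases hb9 : n % 11 = 9
    · obtain ⟨a, rfl⟩ : ∃ a, n = 11 * a + 9 := ⟨n / 11, by omega⟩
      have h1 : tc (11 * a + 9) (11 * a + 9) = tc a a * tc 9 9 := tc_diag a 9 (by omega)
      have h2 : tc (11 * a + 9) (11 * a + 9 + 2) =
          tc a a * tc 9 11 + tc a (a + 1) * tc 9 0 := by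
        have := tc_rec2 a 9 11 (by omega) (by omega) (by omega)
        rwa [show 11 * a + 11 = 11 * a + 9 + 2 by ring, show (11:ℕ) - 11 = 0 from rfl] at this
      have e1 : tc 9 9 = 4 := by
        rw [tc_eq_cast, show (4 : ZMod 11) = ((4:ℕ) : ZMod 11) by decide]; decide
      have e2 : tc 9 11 = 5 := by
        rw [tc_eq_cast, show (5 : ZMod 11) = ((5:ℕ) : ZMod 11) by decide]; decide
      have e3 : tc 9 0 = 1 := by
        rw [tc_eq_cast, show (1 : ZMod 11) = ((1:ℕ) : ZMod 11) by decide]; decide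
      rw [h1, h2, e1, e2, e3]
      have key : tc a a * 4 - (tc a a * 5 + tc a (a + 1) * 1) = 0 ↔ rho a = 10 := by
        rw [rho, ← div_eq_mul_inv, div_eq_iff (tc_diag_ne a),
          show (10 : ZMod 11) = -1 by decide]
        constructor
        · intro h; linear_combination -h
        · intro h; linear_combination -h
      rw [key, (rho_char a).1,
        Pd_iff_exists 9 1 a (by norm_num) (by norm_num)]
      constructor
      · rintro ⟨i, j, hj, h | h⟩
        · exact ⟨i, j, hj, Or.inl (by omega)⟩
        · exact ⟨i, j, hj, Or.inr (Or.inl (by omega))⟩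
      · rintro ⟨i, j, hj, h | h | h | h⟩
        · exact ⟨i, j, hj, Or.inl (by omega)⟩
        · exact ⟨i, j, hj, Or.inr (by omega)⟩
        · have := dvd_form _ _ _ hj h; omega
        · have := dvd_form2 _ _ _ hj h; omega
    · obtain ⟨a, rfl⟩ : ∃ a, n = 11 * a + 10 := ⟨n / 11, by omega⟩
      have h1 : tc (11 * a + 10) (11 * a + 10) = tc a a * tc 10 10 := tc_diag a 10 (by omega)
      have h2 : tc (11 * a + 10) (11 * a + 10 + 2) =
          tc a a * tc 10 12 + tc a (a + 1) * tc 10 1 := by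
        have := tc_rec2 a 10 12 (by omega) (by omega) (by omega)
        rwa [show 11 * a + 12 = 11 * a + 10 + 2 by ring, show (12:ℕ) - 11 = 1 from rfl] at this
      have e1 : tc 10 10 = 10 := by
        rw [tc_eq_cast, show (10 : ZMod 11) = ((10:ℕ) : ZMod 11) by decide]; decide
      have e2 : tc 10 12 = 0 := by
        rw [tc_eq_cast, show (0 : ZMod 11) = ((0:ℕ) : ZMod 11) by decide]; decide
      have e3 : tc 10 1 = 10 := by
        rw [tc_eq_cast, show (10 : ZMod 11) = ((10:ℕ) : ZMod 11) by decide]; decide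
      rw [h1, h2, e1, e2, e3]
      have key : tc a a * 10 - (tc a a * 0 + tc a (a + 1) * 10) = 0 ↔ rho a = 1 := by
        rw [rho, ← div_eq_mul_inv, div_eq_iff (tc_diag_ne a), one_mul]
        constructor
        · intro h
          have h10 : (10 : ZMod 11) ≠ 0 := by decide
          have h' : (tc a (a + 1) - tc a a) * 10 = 0 := by linear_combination -h
          rcases mul_eq_zero.1 h' with h0 | h0
          · linear_combination h0
          · exact absurd h0 h10
        · intro h; rw [h]; ring
      rw [key, (rho_char a).2.1,
        Pd_iff_exists 2 10 a (by norm_num) (by norm_num)]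
      constructor
      · rintro ⟨i, j, hj, h | h⟩
        · exact ⟨i, j, hj, Or.inr (Or.inr (Or.inl (by omega)))⟩
        · exact ⟨i, j, hj, Or.inr (Or.inr (Or.inr (by omega)))⟩
      · rintro ⟨i, j, hj, h | h | h | h⟩
        · have := dvd_form _ _ _ hj h; omega
        · have := dvd_form2 _ _ _ hj h; omega
        · exact ⟨i, j, hj, Or.inl (by omega)⟩
        · exact ⟨i, j, hj, Or.inr (by omega)⟩
end

section
/- For every integer k ≥ 1, the Motzkin number M_{19^k − 2} is congruent to 0 modulo 19. -/
open Finset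

open PowerSeries

lemma hockey (m s : ℕ) : ∑ i ∈ range (m + 1), i.choose s = (m + 1).choose (s + 1) := by
  rcases le_or_gt s m with h | h
  · rw [← Nat.sum_Icc_choose]
    rw [range_eq_Ico, ← Finset.sum_Ico_consecutive _ (Nat.zero_le s) (by omega : s ≤ m + 1),
      ← Finset.Ico_add_one_right_eq_Icc]
    have : ∑ i ∈ Ico 0 s, i.choose s = 0 := by
      apply Finset.sum_eq_zero; intro i hi; simp at hi
      exact Nat.choose_eq_zero_of_lt (by omega)
    omega
  · rw [Nat.choose_eq_zero_of_lt (by omega)]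
    apply Finset.sum_eq_zero; intro i hi; simp at hi
    exact Nat.choose_eq_zero_of_lt (by omega)

lemma dualV (t : ℕ) : ∀ m s : ℕ,
    ∑ i ∈ range (m + 1), i.choose s * (m - i).choose t = (m + 1).choose (s + t + 1) := by
  induction t with
  | zero => intro m s; simpa using hockey m s
  | succ t ih =>
    intro m s
    induction m with
    | zero =>
      simp [Nat.choose_eq_zero_of_lt (show 1 < s + (t+1) + 1 by omega)]
    | succ m ihm =>
      rw [Finset.sum_range_succ]
      have step : ∀ i ∈ range (m + 1),
          i.choose s * (m + 1 - i).choose (t + 1)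
            = i.choose s * (m - i).choose t + i.choose s * (m - i).choose (t + 1) := by
        intro i hi; simp only [mem_range] at hi
        have : m + 1 - i = (m - i) + 1 := by omega
        rw [this, Nat.choose_succ_succ, Nat.mul_add]
      rw [Finset.sum_congr rfl step, Finset.sum_add_distrib, ih m s, ihm,
        show s + (t + 1) + 1 = (s + t + 1) + 1 from rfl,
        Nat.choose_succ_succ (m + 1) (s + t + 1)]
      simp

lemma motzkin_ext (n m : ℕ) (h : n + 1 ≤ m) :
    motzkin n = ∑ k ∈ range m, n.choose (2 * k) * catalan k := by
  refine Finset.sum_subset (range_subset_range.2 h) fun k _ hk => ?_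
  simp only [mem_range, not_lt] at hk
  rw [Nat.choose_eq_zero_of_lt (by omega), zero_mul]

lemma catalan_succ_range (s : ℕ) :
    catalan (s + 1) = ∑ a ∈ range (s + 1), catalan a * catalan (s - a) := by
  rw [catalan_succ', Finset.Nat.sum_antidiagonal_eq_sum_range_succ_mk]

lemma motzkin_rec (n : ℕ) :
    motzkin (n + 2) = motzkin (n + 1) + ∑ i ∈ range (n + 1), motzkin i * motzkin (n - i) := by
  have hB : ∑ i ∈ range (n + 1), motzkin i * motzkin (n - i)
      = ∑ k ∈ range (n + 2), (n+1).choose (2*k+1) * catalan (k+1) := by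
    calc ∑ i ∈ range (n + 1), motzkin i * motzkin (n - i)
        = ∑ i ∈ range (n+1), ∑ a ∈ range (n+1), ∑ b ∈ range (n+1),
            (catalan a * catalan b) * (i.choose (2*a) * (n-i).choose (2*b)) := by
          refine sum_congr rfl fun i hi => ?_
          simp only [mem_range] at hi
          rw [motzkin_ext i (n+1) (by omega), motzkin_ext (n-i) (n+1) (by omega),
            Finset.sum_mul_sum]
          exact sum_congr rfl fun a _ => sum_congr rfl fun b _ => by ring
      _ = ∑ a ∈ range (n+1), ∑ b ∈ range (n+1),
            (catalan a * catalan b) * ∑ i ∈ range (n+1), i.choose (2*a) * (n-i).choose (2*b) := by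
          rw [Finset.sum_comm]
          refine sum_congr rfl fun a _ => ?_
          rw [Finset.sum_comm]
          exact sum_congr rfl fun b _ => by rw [Finset.mul_sum]
      _ = ∑ a ∈ range (n+1), ∑ b ∈ range (n+1),
            (catalan a * catalan b) * (n+1).choose (2*(a+b)+1) := by
          refine sum_congr rfl fun a _ => sum_congr rfl fun b _ => ?_
          rw [dualV (2*b) n (2*a), show 2*a+2*b+1 = 2*(a+b)+1 by ring]
      _ = ∑ a ∈ range (n+1), ∑ b ∈ range (n+1-a),
            (catalan a * catalan b) * (n+1).choose (2*(a+b)+1) := by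
          refine sum_congr rfl fun a ha => (Finset.sum_subset ?_ fun b _ hb => ?_).symm
          · exact range_subset_range.2 (by omega)
          · simp only [mem_range, not_lt] at hb
            rw [Nat.choose_eq_zero_of_lt (by omega), mul_zero]
      _ = ∑ s ∈ range (n+1), ∑ a ∈ range (s+1),
            (catalan a * catalan (s-a)) * (n+1).choose (2*(a+(s-a))+1) := by
          rw [Finset.sum_range_diag_flip (n+1)
            (fun a b => (catalan a * catalan b) * (n+1).choose (2*(a+b)+1))]
      _ = ∑ s ∈ range (n+1), (n+1).choose (2*s+1) * catalan (s+1) := by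
          refine sum_congr rfl fun s hs => ?_
          have : ∀ a ∈ range (s+1), (catalan a * catalan (s-a)) * (n+1).choose (2*(a+(s-a))+1)
              = (n+1).choose (2*s+1) * (catalan a * catalan (s-a)) := by
            intro a ha; simp only [mem_range] at ha
            rw [show a + (s - a) = s by omega]; ring
          rw [Finset.sum_congr rfl this, ← Finset.mul_sum, ← catalan_succ_range]
      _ = ∑ k ∈ range (n + 2), (n+1).choose (2*k+1) * catalan (k+1) := by
          symm
          rw [Finset.sum_range_succ, Nat.choose_eq_zero_of_lt (by omega), zero_mul, add_zero]
  have h2 : motzkin (n+2)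
      = 1 + (∑ k ∈ range (n+2), (n+1).choose (2*k+2) * catalan (k+1)
          + ∑ k ∈ range (n+2), (n+1).choose (2*k+1) * catalan (k+1)) := by
    show (∑ k ∈ range (n + 3), (n+2).choose (2*k) * catalan k) = _
    rw [Finset.sum_range_succ']
    simp only [Nat.mul_zero, Nat.choose_zero_right, catalan_zero, mul_one]
    have : ∀ k ∈ range (n+2), (n+2).choose (2*(k+1)) * catalan (k+1)
        = (n+1).choose (2*k+2) * catalan (k+1) + (n+1).choose (2*k+1) * catalan (k+1) := by
      intro k _
      rw [show 2*(k+1) = (2*k+1)+1 by ring, Nat.choose_succ_succ (n+1) (2*k+1)]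
      ring
    rw [Finset.sum_congr rfl this, Finset.sum_add_distrib]
    omega
  have h1 : motzkin (n+1) = 1 + ∑ k ∈ range (n+2), (n+1).choose (2*k+2) * catalan (k+1) := by
    show (∑ k ∈ range (n + 2), (n+1).choose (2*k) * catalan k) = _
    rw [Finset.sum_range_succ']
    simp only [Nat.mul_zero, Nat.choose_zero_right, catalan_zero, mul_one]
    have : ∀ k ∈ range (n+1), (n+1).choose (2*(k+1)) * catalan (k+1)
        = (n+1).choose (2*k+2) * catalan (k+1) := by
      intro k _; rw [show 2*(k+1) = 2*k+2 by ring]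
    rw [Finset.sum_congr rfl this,
      Finset.sum_range_succ _ (n+1), Nat.choose_eq_zero_of_lt (by omega), zero_mul, add_zero]
    omega
  omega

noncomputable section
abbrev K : Type := ZMod 19

def a : ℕ → K
  | 0 => 1
  | 1 => -1
  | (m+2) => -2 * (motzkin m : K)

def f : PowerSeries K := PowerSeries.mk a

def hs : PowerSeries K := 1 - PowerSeries.C (R := K) 2 * PowerSeries.X - PowerSeries.C (R := K) 3 * PowerSeries.X ^ 2

lemma hs_coeff (k : ℕ) : PowerSeries.coeff (R := K) k hs
    = if k = 0 then 1 else if k = 1 then -2 else if k = 2 then -3 else 0 := by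
  simp only [hs, map_sub, PowerSeries.coeff_one, PowerSeries.coeff_C_mul,
    PowerSeries.coeff_X, PowerSeries.coeff_X_pow]
  split_ifs <;> simp_all

lemma motzkin_zero : motzkin 0 = 1 := by simp [motzkin]
lemma motzkin_one : motzkin 1 = 1 := by simp [motzkin, Finset.sum_range_succ]

lemma f_sq : f ^ 2 = hs := by
  ext n
  rw [pow_two, PowerSeries.coeff_mul, Finset.Nat.sum_antidiagonal_eq_sum_range_succ_mk, hs_coeff]
  simp only [f, PowerSeries.coeff_mk]
  match n with
  | 0 => simp [a]
  | 1 => simp [Finset.sum_range_succ, a]; ring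
  | 2 => norm_num [Finset.sum_range_succ, a, motzkin_zero]
  | 3 => norm_num [Finset.sum_range_succ, a, motzkin_zero, motzkin_one]
  | (m+4) =>
    rw [Finset.sum_range_succ', Finset.sum_range_succ', Finset.sum_range_succ,
      Finset.sum_range_succ]
    have hm : ∀ i ∈ range (m+1), a (i+1+1) * a (m+4-(i+1+1))
        = 4 * ((motzkin i : K) * (motzkin (m-i) : K)) := by
      intro i hi; simp only [mem_range] at hi
      have e1 : m + 4 - (i+1+1) = (m - i) + 2 := by omega
      rw [e1]; show (-2 * (motzkin i : K)) * (-2 * (motzkin (m-i) : K)) = _; ring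
    rw [Finset.sum_congr rfl hm, ← Finset.mul_sum]
    rw [show m + 4 - (m+2+1+1) = 0 by omega, show m + 4 - (m+1+1+1) = 1 by omega,
      show m + 4 - (0+1) = m + 3 by omega, show m + 4 - 0 = m + 4 by omega,
      show m+1+1+1 = (m+1)+2 by omega, show m+2+1+1 = (m+2)+2 by omega,
      show m + 3 = (m+1)+2 by omega, show m + 4 = (m+2)+2 by omega,
      if_neg (by omega : ¬ (m+2)+2 = 0), if_neg (by omega : ¬ (m+2)+2 = 1),
      if_neg (by omega : ¬ (m+2)+2 = 2)]
    simp only [a, zero_add]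
    have hrK : (motzkin (m+2) : K) = (motzkin (m+1) : K)
        + ∑ i ∈ range (m+1), (motzkin i : K) * (motzkin (m-i) : K) := by
      have hr := motzkin_rec m
      push_cast [hr]
      ring
    linear_combination (-4 : K) * hrK

def ex (u : PowerSeries K) : PowerSeries K :=
  PowerSeries.mk fun n => if 19 ∣ n then PowerSeries.coeff (R := K) (n / 19) u else 0

def lam (u : PowerSeries K) : PowerSeries K :=
  PowerSeries.mk fun n => PowerSeries.coeff (R := K) (19 * n) u

lemma S1 (u v : PowerSeries K) (n : ℕ) :
    PowerSeries.coeff (R := K) (19 * n) (ex u * v)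
      = ∑ i ∈ range (n + 1), PowerSeries.coeff (R := K) i u * PowerSeries.coeff (R := K) (19*n - 19*i) v := by
  rw [PowerSeries.coeff_mul, Finset.Nat.sum_antidiagonal_eq_sum_range_succ_mk]
  simp only [ex, PowerSeries.coeff_mk, ite_mul, zero_mul]
  rw [← Finset.sum_filter]
  refine Finset.sum_nbij' (fun k => k / 19) (fun i => 19 * i) ?_ ?_ ?_ ?_ ?_
  · intro k hk
    simp only [mem_filter, mem_range] at hk
    simp only [mem_range]
    try dsimp only
    omega
  · intro i hi
    simp only [mem_range] at hi
    simp only [mem_filter, mem_range]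
    try dsimp only
    omega
  · intro k hk
    simp only [mem_filter, mem_range] at hk
    try dsimp only
    omega
  · intro i hi
    simp only [mem_range] at hi
    try dsimp only
    omega
  · intro k hk
    simp only [mem_filter, mem_range] at hk
    obtain ⟨c, rfl⟩ := hk.2
    try dsimp only
    rw [Nat.mul_div_cancel_left c (by norm_num)]

lemma ex_mul (u v : PowerSeries K) : ex u * ex v = ex (u * v) := by
  ext N
  by_cases hN : 19 ∣ N
  · obtain ⟨n, rfl⟩ := hN
    rw [S1]
    simp only [ex, PowerSeries.coeff_mk, dvd_mul_right, if_pos,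
      Nat.mul_div_cancel_left _ (by norm_num : 0 < 19)]
    rw [PowerSeries.coeff_mul, Finset.Nat.sum_antidiagonal_eq_sum_range_succ_mk]
    refine Finset.sum_congr rfl fun i hi => ?_
    simp only [mem_range] at hi
    have h1 : 19 * n - 19 * i = 19 * (n - i) := by omega
    have h2 : 19 ∣ 19 * n - 19 * i := ⟨n - i, h1⟩
    rw [h1]
    simp [Nat.mul_div_cancel_left _ (by norm_num : 0 < 19)]
  · rw [PowerSeries.coeff_mul]
    have : ∀ p ∈ antidiagonal N,
        PowerSeries.coeff (R := K) p.1 (ex u) * PowerSeries.coeff (R := K) p.2 (ex v) = 0 := by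
      intro p hp
      rw [Finset.HasAntidiagonal.mem_antidiagonal] at hp
      simp only [ex, PowerSeries.coeff_mk]
      by_cases h1 : 19 ∣ p.1
      · rw [if_neg (fun h2 => hN (hp ▸ Nat.dvd_add h1 h2)), mul_zero]
      · rw [if_neg h1, zero_mul]
    rw [Finset.sum_eq_zero this]
    simp [ex, PowerSeries.coeff_mk, if_neg hN]

lemma lam_ex_mul (u v : PowerSeries K) : lam (ex u * v) = u * lam v := by
  ext n
  simp only [lam, PowerSeries.coeff_mk, S1]
  rw [PowerSeries.coeff_mul, Finset.Nat.sum_antidiagonal_eq_sum_range_succ_mk]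
  refine Finset.sum_congr rfl fun i hi => ?_
  simp only [mem_range] at hi
  rw [show 19 * n - 19 * i = 19 * (n - i) by omega]
  simp only [lam, PowerSeries.coeff_mk]

lemma ex_one : ex 1 = 1 := by
  ext n
  simp only [ex, PowerSeries.coeff_mk, PowerSeries.coeff_one]
  split_ifs <;> first | rfl | omega

lemma ex_pow (u : PowerSeries K) (k : ℕ) : ex (u ^ k) = (ex u) ^ k := by
  induction k with
  | zero => simpa using ex_one
  | succ k ih => rw [pow_succ, pow_succ, ← ih, ex_mul]

instance fact19 : Fact (Nat.Prime 19) := ⟨by norm_num⟩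

instance : CharP (PowerSeries K) 19 :=
  charP_of_injective_ringHom PowerSeries.C_injective 19

lemma two_pow : (2 : K) ^ 19 = 2 := ZMod.pow_card 2
lemma three_pow : (3 : K) ^ 19 = 3 := ZMod.pow_card 3

lemma hs_pow_19 : hs ^ 19 = 1 - PowerSeries.C (R := K) 2 * PowerSeries.X ^ 19
    - PowerSeries.C (R := K) 3 * PowerSeries.X ^ 38 := by
  have h1 : hs = 1 + (-(PowerSeries.C (R := K) 2 * PowerSeries.X))
      + (-(PowerSeries.C (R := K) 3 * PowerSeries.X ^ 2)) := by simp only [hs]; ring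
  rw [h1, add_pow_char (p := 19), add_pow_char (p := 19)]
  have o19 : Odd 19 := ⟨9, by norm_num⟩
  rw [o19.neg_pow, o19.neg_pow, one_pow, mul_pow, mul_pow, ← map_pow, ← map_pow,
    two_pow, three_pow, ← pow_mul]
  ring

lemma exh : ex hs = 1 - PowerSeries.C (R := K) 2 * PowerSeries.X ^ 19
    - PowerSeries.C (R := K) 3 * PowerSeries.X ^ 38 := by
  ext n
  simp only [ex, PowerSeries.coeff_mk, hs_coeff, map_sub, PowerSeries.coeff_one,
    PowerSeries.coeff_C_mul, PowerSeries.coeff_X_pow]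
  split_ifs <;> first | omega | norm_num

lemma ex_hs : ex hs = hs ^ 19 := exh.trans hs_pow_19.symm

def g : PowerSeries K := ex f

lemma g_sq : g ^ 2 = ex hs := by
  rw [g, pow_two, ex_mul, ← pow_two, f_sq]

lemma fh9_sq : (f * hs ^ 9) ^ 2 = ex hs := by
  rw [ex_hs, mul_pow, f_sq, ← pow_mul, ← pow_succ']

lemma constC_f : PowerSeries.constantCoeff (R := K) f = 1 := by
  simp [f, PowerSeries.coeff_zero_eq_constantCoeff.symm, a]

lemma constC_hs : PowerSeries.constantCoeff (R := K) hs = 1 := by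
  simp [hs]

lemma constC_g : PowerSeries.constantCoeff (R := K) g = 1 := by
  rw [← PowerSeries.coeff_zero_eq_constantCoeff]
  simp only [g, ex, PowerSeries.coeff_mk, dvd_zero, if_pos, Nat.zero_div]
  rw [PowerSeries.coeff_zero_eq_constantCoeff]
  exact constC_f

lemma key : f * hs ^ 9 = g := by
  have hsq : (f * hs ^ 9 - g) * (f * hs ^ 9 + g) = 0 := by
    have h2 : (f * hs ^ 9) ^ 2 = g ^ 2 := fh9_sq.trans g_sq.symm
    linear_combination h2
  rcases mul_eq_zero.mp hsq with h | h
  · exact sub_eq_zero.mp h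
  · exfalso
    have hc := congrArg (PowerSeries.constantCoeff (R := K)) h
    rw [map_add, map_mul, map_pow, constC_f, constC_hs, constC_g, map_zero] at hc
    norm_num at hc
    exact (by decide : (2 : K) ≠ 0) (by linear_combination hc)

lemma f_ne : f ≠ 0 := fun h => by
  have := congrArg (PowerSeries.constantCoeff (R := K)) h
  rw [constC_f, map_zero] at this
  exact one_ne_zero this

lemma hs_ne : hs ≠ 0 := fun h => by
  have := congrArg (PowerSeries.constantCoeff (R := K)) h
  rw [constC_hs, map_zero] at this
  exact one_ne_zero this

lemma f19 : f ^ 19 = g := by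
  apply mul_right_cancel₀ f_ne
  rw [← key]
  calc f ^ 19 * f = (f ^ 2) ^ 10 := by ring
    _ = hs ^ 10 := by rw [f_sq]
    _ = f * hs ^ 9 * f := by rw [← f_sq]; ring

lemma main_rel : hs * lam f = f * lam (hs ^ 10) := by
  have s2 : ex (hs ^ 9) * f = ex f * hs ^ 162 := by
    calc ex (hs ^ 9) * f = (g ^ 2) ^ 9 * f := by rw [ex_pow, ← g_sq]
      _ = ((f * hs ^ 9) ^ 2) ^ 9 * f := by rw [key]
      _ = f ^ 19 * hs ^ 162 := by ring
      _ = g * hs ^ 162 := by rw [f19]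
      _ = ex f * hs ^ 162 := rfl
  have s1 : hs ^ 9 * lam f = f * lam (hs ^ 162) := by
    rw [← lam_ex_mul (hs ^ 9) f, s2, lam_ex_mul]
  have e : hs ^ 162 = ex (hs ^ 8) * hs ^ 10 := by
    rw [ex_pow, ex_hs, ← pow_mul, ← pow_add]
  have s4 : lam (hs ^ 162) = hs ^ 8 * lam (hs ^ 10) := by
    rw [e, lam_ex_mul]
  apply mul_left_cancel₀ (pow_ne_zero 8 hs_ne)
  calc hs ^ 8 * (hs * lam f) = hs ^ 9 * lam f := by ring
    _ = f * lam (hs ^ 162) := s1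
    _ = f * (hs ^ 8 * lam (hs ^ 10)) := by rw [s4]
    _ = hs ^ 8 * (f * lam (hs ^ 10)) := by ring

lemma coeff_pow_linear (c : K) (m j : ℕ) :
    PowerSeries.coeff (R := K) j ((1 + PowerSeries.C (R := K) c * PowerSeries.X) ^ m)
      = (m.choose j : K) * c ^ j := by
  rw [add_comm, add_pow, map_sum]
  have step : ∀ k ∈ range (m + 1),
      PowerSeries.coeff (R := K) j ((PowerSeries.C (R := K) c * PowerSeries.X) ^ k * 1 ^ (m - k)
          * ((m.choose k : ℕ) : PowerSeries K))
        = if k = j then (m.choose j : K) * c ^ j else 0 := by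
    intro k _
    have : (PowerSeries.C (R := K) c * PowerSeries.X) ^ k * 1 ^ (m - k)
        * ((m.choose k : ℕ) : PowerSeries K)
        = PowerSeries.C (R := K) (c ^ k * (m.choose k : K)) * PowerSeries.X ^ k := by
      rw [one_pow, mul_pow, ← map_pow, ← map_natCast (PowerSeries.C (R := K)) (m.choose k),
        map_mul]
      ring
    rw [this, PowerSeries.coeff_C_mul, PowerSeries.coeff_X_pow]
    split_ifs with h1 h2 h3
    · subst h2; ring
    · subst h1; simp at h2
    · subst h3; simp at h1
    · ring
  rw [Finset.sum_congr rfl step, Finset.sum_ite_eq' (range (m + 1)) j]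
  split_ifs with h
  · rfl
  · simp only [mem_range, not_lt] at h
    rw [Nat.choose_eq_zero_of_lt (by omega), Nat.cast_zero, zero_mul]

lemma hs_factor : hs = (1 + PowerSeries.C (R := K) 1 * PowerSeries.X)
    * (1 + PowerSeries.C (R := K) (-3) * PowerSeries.X) := by
  have h2 : PowerSeries.C (R := K) 2 = 2 := map_ofNat _ 2
  have h3 : PowerSeries.C (R := K) 3 = 3 := map_ofNat _ 3
  have hm3 : PowerSeries.C (R := K) (-3) = -3 := by rw [map_neg, h3]
  simp only [hs, map_one, h2, h3, hm3]
  ring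

lemma coeff19_hs10 : PowerSeries.coeff (R := K) 19 (hs ^ 10) = -1 := by
  rw [hs_factor, mul_pow, PowerSeries.coeff_mul,
    Finset.Nat.sum_antidiagonal_eq_sum_range_succ_mk]
  have step : ∀ i ∈ range 20,
      PowerSeries.coeff (R := K) i ((1 + PowerSeries.C (R := K) 1 * PowerSeries.X) ^ 10)
        * PowerSeries.coeff (R := K) (19 - i) ((1 + PowerSeries.C (R := K) (-3) * PowerSeries.X) ^ 10)
      = ((Nat.choose 10 i : K) * 1 ^ i) * ((Nat.choose 10 (19 - i) : K) * (-3) ^ (19 - i)) := by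
    intro i _
    rw [coeff_pow_linear, coeff_pow_linear]
  rw [Finset.sum_congr rfl step]
  decide

lemma coeff_big_hs10 (k : ℕ) (hk : 38 ≤ k) : PowerSeries.coeff (R := K) k (hs ^ 10) = 0 := by
  rw [hs_factor, mul_pow, PowerSeries.coeff_mul]
  refine Finset.sum_eq_zero fun p hp => ?_
  rw [Finset.HasAntidiagonal.mem_antidiagonal] at hp
  rw [coeff_pow_linear, coeff_pow_linear]
  rcases le_or_gt p.1 10 with h1 | h1
  · rw [Nat.choose_eq_zero_of_lt (show 10 < p.2 by omega), Nat.cast_zero, zero_mul, mul_zero]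
  · rw [Nat.choose_eq_zero_of_lt h1, Nat.cast_zero, zero_mul, zero_mul]

lemma lamh10 : lam (hs ^ 10) = 1 - PowerSeries.X := by
  ext n
  simp only [lam, PowerSeries.coeff_mk, map_sub, PowerSeries.coeff_one, PowerSeries.coeff_X]
  match n with
  | 0 =>
    rw [Nat.mul_zero, PowerSeries.coeff_zero_eq_constantCoeff_apply, map_pow, constC_hs]
    norm_num
  | 1 => rw [Nat.mul_one, coeff19_hs10]; norm_num
  | (n+2) =>
    rw [coeff_big_hs10 (19 * (n + 2)) (by omega), if_neg (by omega : ¬ n+2 = 0),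
      if_neg (by omega : ¬ n+2 = 1)]
    norm_num

lemma C2 : PowerSeries.C (R := K) 2 = (2 : PowerSeries K) := map_ofNat _ 2
lemma C3 : PowerSeries.C (R := K) 3 = (3 : PowerSeries K) := map_ofNat _ 3

lemma hsl : hs = 1 - 2 * PowerSeries.X - 3 * PowerSeries.X ^ 2 := by
  rw [hs, C2, C3]

lemma f_sq_lit : f ^ 2 = 1 - 2 * PowerSeries.X - 3 * PowerSeries.X ^ 2 := by
  rw [f_sq, hsl]

open PowerSeries in
lemma hs_der : (d⁄dX K) hs = - 2 - 6 * PowerSeries.X := by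
  have h : hs = 1 - 2 * PowerSeries.X - 3 * (PowerSeries.X * PowerSeries.X) := by
    rw [hsl]; ring
  rw [h, map_sub, map_sub]
  have d2 : (d⁄dX K) (2 * PowerSeries.X) = 2 := by
    rw [Derivation.leibniz]
    have : (d⁄dX K) (2 : PowerSeries K) = 0 := by
      rw [← C2]; exact PowerSeries.derivative_C (r := (2 : K))
    rw [this, PowerSeries.derivative_X]
    simp
  have d3 : (d⁄dX K) (3 * (PowerSeries.X * PowerSeries.X)) = 6 * PowerSeries.X := by
    rw [Derivation.leibniz, Derivation.leibniz]
    have : (d⁄dX K) (3 : PowerSeries K) = 0 := by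
      rw [← C3]; exact PowerSeries.derivative_C (r := (3 : K))
    rw [this, PowerSeries.derivative_X]
    simp only [smul_eq_mul, smul_zero, mul_one, mul_zero, add_zero, zero_add]
    ring
  rw [d2, d3, Derivation.map_one_eq_zero]
  ring

open PowerSeries in
lemma two_ff' : (2 : PowerSeries K) * f * (d⁄dX K) f = - 2 - 6 * PowerSeries.X := by
  have h := congrArg (d⁄dX K) f_sq
  rw [Derivation.leibniz_pow, hs_der] at h
  rw [← h]
  simp only [smul_smul, smul_eq_mul, pow_one]
  push_cast
  ring

open PowerSeries in
lemma hsf2 : 2 * (1 - 2 * PowerSeries.X - 3 * PowerSeries.X ^ 2) * (d⁄dX K) f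
    = (- 2 - 6 * PowerSeries.X) * f := by
  linear_combination f * two_ff' - 2 * (d⁄dX K) f * f_sq_lit

open PowerSeries in
lemma hd : hs * (f - PowerSeries.X * (d⁄dX K) f) = (1 - PowerSeries.X) * f := by
  have two_ne : (2 : PowerSeries K) ≠ 0 := by
    intro h
    have := congrArg (PowerSeries.constantCoeff (R := K)) h
    rw [map_zero, map_ofNat] at this
    exact (by decide : (2 : K) ≠ 0) this
  apply mul_left_cancel₀ two_ne
  rw [hsl]
  linear_combination (- PowerSeries.X) * hsf2

open PowerSeries in
lemma lam_f : lam f = f - PowerSeries.X * (d⁄dX K) f := by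
  apply mul_left_cancel₀ hs_ne
  rw [main_rel, lamh10, hd]
  ring

open PowerSeries in
lemma coeff_rel (n : ℕ) : a (19 * n) = (1 - (n : K)) * a n := by
  have h := congrArg (PowerSeries.coeff (R := K) n) lam_f
  rw [map_sub] at h
  simp only [lam, f, PowerSeries.coeff_mk] at h
  match n with
  | 0 =>
    rw [PowerSeries.coeff_zero_X_mul] at h
    simpa using h
  | (n+1) =>
    rw [PowerSeries.coeff_succ_X_mul, PowerSeries.coeff_derivative] at h
    simp only [PowerSeries.coeff_mk] at h
    rw [h]
    push_cast
    ring

lemma a_19pow (k : ℕ) (hk : 1 ≤ k) : a (19 ^ k) = 0 := by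
  induction k with
  | zero => omega
  | succ k ih =>
    rcases Nat.eq_zero_or_pos k with rfl | hkpos
    · have h := coeff_rel 1
      norm_num at h
      simpa using h
    · have h := coeff_rel (19 ^ k)
      have hc : ((19 ^ k : ℕ) : K) = 0 := by
        rw [Nat.cast_pow]
        rw [show ((19 : ℕ) : K) = 0 from rfl]
        exact zero_pow (by omega)
      rw [hc, ih hkpos] at h
      rw [pow_succ']
      simpa using h

theorem motzkin_19pow_sub_two (k : ℕ) (hk : 1 ≤ k) :
    motzkin (19 ^ k - 2) % 19 = 0 := by
  have h19 : 19 ≤ 19 ^ k := by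
    calc 19 = 19 ^ 1 := (pow_one 19).symm
    _ ≤ 19 ^ k := Nat.pow_le_pow_right (by norm_num) hk
  have ha := a_19pow k hk
  rw [show 19 ^ k = (19 ^ k - 2) + 2 by omega] at ha
  rw [show a ((19 ^ k - 2) + 2) = -2 * (motzkin (19 ^ k - 2) : K) from rfl] at ha
  have h2 : (motzkin (19 ^ k - 2) : K) = 0 :=
    (mul_eq_zero.mp ha).resolve_left (by decide)
  have hdvd := (ZMod.natCast_eq_zero_iff (motzkin (19 ^ k - 2)) 19).mp h2
  omega
end
end
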